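/- If 11 cards have pairwise distinct values among 12 possible values and are distributed over 4 suits with some suit having at least 4 cards, then that suit contains two cards whose values are at circular distance at most 3 in Z/12Z. -/

import Mathlib

set_option maxRecDepth 100000 in
lemma key4_aux : ∀ a b c d : ZMod 12, a ≠ b → a ≠ c → a ≠ d → b ≠ c → b ≠ d → c ≠ d →
    (min (a-b).val (b-a).val ≤ 3 ∨ min (a-c).val (c-a).val ≤ 3 ∨ min (a-d).val (d-a).val ≤ 3 ∨
     min (b-c).val (c-b).val ≤ 3 ∨ min (b-d).val (d-b).val ≤ 3 ∨ min (c-d).val (d-c).val ≤ 3) := by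
  decide

theorem stmt_13 (h : Finset (Fin 4 × ZMod 12)) (hcard : h.card = 11)
    (hinj : ∀ c1 ∈ h, ∀ c2 ∈ h, c1.2 = c2.2 → c1 = c2)
    (s : Fin 4) (hs : 4 ≤ (h.filter (fun c => c.1 = s)).card) :
    ∃ c ∈ h, ∃ c' ∈ h, c ≠ c' ∧ c.1 = s ∧ c'.1 = s ∧
      min (c.2 - c'.2).val (c'.2 - c.2).val ≤ 3 := by
  obtain ⟨t, hts, htc⟩ := Finset.exists_subset_card_eq hs
  obtain ⟨a, t1, ha1, rfl, h3⟩ := Finset.card_eq_succ.mp htc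
  obtain ⟨b, t2, hb2, rfl, h2⟩ := Finset.card_eq_succ.mp h3
  obtain ⟨c, t3, hc3, rfl, h1⟩ := Finset.card_eq_succ.mp h2
  obtain ⟨d, rfl⟩ := Finset.card_eq_one.mp h1
  simp only [Finset.mem_insert, Finset.mem_singleton, not_or] at ha1 hb2 hc3
  have ma := hts (Finset.mem_insert_self a _)
  have mb := hts (by simp : b ∈ insert a (insert b (insert c {d})))
  have mc := hts (by simp : c ∈ insert a (insert b (insert c {d})))
  have md := hts (by simp : d ∈ insert a (insert b (insert c {d})))
  rw [Finset.mem_filter] at ma mb mc md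
  have hab : a ≠ b := ha1.1
  have hac : a ≠ c := ha1.2.1
  have had : a ≠ d := ha1.2.2
  have hbc : b ≠ c := hb2.1
  have hbd : b ≠ d := hb2.2
  have hcd : c ≠ d := hc3
  rcases key4_aux a.2 b.2 c.2 d.2
    (fun e => hab (hinj a ma.1 b mb.1 e)) (fun e => hac (hinj a ma.1 c mc.1 e))
    (fun e => had (hinj a ma.1 d md.1 e)) (fun e => hbc (hinj b mb.1 c mc.1 e))
    (fun e => hbd (hinj b mb.1 d md.1 e)) (fun e => hcd (hinj c mc.1 d md.1 e))
    with H | H | H | H | H | H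
  · exact ⟨a, ma.1, b, mb.1, hab, ma.2, mb.2, H⟩
  · exact ⟨a, ma.1, c, mc.1, hac, ma.2, mc.2, H⟩
  · exact ⟨a, ma.1, d, md.1, had, ma.2, md.2, H⟩
  · exact ⟨b, mb.1, c, mc.1, hbc, mb.2, mc.2, H⟩
  · exact ⟨b, mb.1, d, md.1, hbd, mb.2, md.2, H⟩
  · exact ⟨c, mc.1, d, md.1, hcd, mc.2, md.2, H⟩
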